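/- Let ψ ∈ ℂ^8 be written as ψ = |0⟩A + |1⟩B. Then there exists a 2×2 unitary matrix W such that (W ⊗ I ⊗ I)ψ, written as |0⟩A' + |1⟩B', satisfies det(A') = 0, where I is the 2×2 identity matrix. (If det(B) ≠ 0 one may take W = U(1,z₀) where z₀ is a root of the quadratic equation det(A + zB) = 0; if det(B) = 0 one may take W = [[0,1],[-1,0]].) -/

import Mathlib

open Matrix Complex
open scoped ComplexConjugate

noncomputable section

/-- The matrix `T₀` of a 3-qubit state vector `ψ = |0⟩T₀ + |1⟩T₁`. -/
def q3T0 (ψ : Fin 8 → ℂ) : Matrix (Fin 2) (Fin 2) ℂ := !![ψ 0, ψ 1; ψ 2, ψ 3]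

/-- The matrix `T₁` of a 3-qubit state vector `ψ = |0⟩T₀ + |1⟩T₁`. -/
def q3T1 (ψ : Fin 8 → ℂ) : Matrix (Fin 2) (Fin 2) ℂ := !![ψ 4, ψ 5; ψ 6, ψ 7]

/-- bit of qubit 2 (leftmost) in the index `4a+2b+c`. -/
def bit2 (i : Fin 8) : Fin 2 := ⟨i.val / 4, by have := i.isLt; omega⟩
/-- bit of qubit 1 (middle). -/
def bit1 (i : Fin 8) : Fin 2 := ⟨i.val / 2 % 2, by omega⟩
/-- bit of qubit 0 (rightmost). -/
def bit0 (i : Fin 8) : Fin 2 := ⟨i.val % 2, by omega⟩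

/-- Kronecker product `U ⊗ V ⊗ W` acting on `ℂ^8`, with `|abc⟩` at index `4a+2b+c`. -/
def kron3 (U V W : Matrix (Fin 2) (Fin 2) ℂ) : Matrix (Fin 8) (Fin 8) ℂ :=
  fun i j => U (bit2 i) (bit2 j) * V (bit1 i) (bit1 j) * W (bit0 i) (bit0 j)

/-- The unitary matrix `U(x,y) = (1/√(|x|²+|y|²))·[[x,y],[-ȳ,x̄]]`. -/
def Umat (x y : ℂ) : Matrix (Fin 2) (Fin 2) ℂ :=
  ((((Real.sqrt (normSq x + normSq y))⁻¹ : ℝ) : ℂ)) • !![x, y; -(conj y), conj x]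

lemma key (W : Matrix (Fin 2) (Fin 2) ℂ) (ψ : Fin 8 → ℂ) :
    q3T0 ((kron3 W 1 1).mulVec ψ) = W 0 0 • q3T0 ψ + W 0 1 • q3T1 ψ := by
  ext i j
  fin_cases i <;> fin_cases j <;>
    simp [q3T0, q3T1, kron3, mulVec, Fin.sum_univ_eight, bit0, bit1, bit2,
      Matrix.one_apply, Fin.ext_iff, dotProduct,
      show ((3:Fin 8):ℕ)=3 from rfl, show ((4:Fin 8):ℕ)=4 from rfl,
      show ((5:Fin 8):ℕ)=5 from rfl, show ((6:Fin 8):ℕ)=6 from rfl,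
      show ((7:Fin 8):ℕ)=7 from rfl]

lemma umat_unitary (z : ℂ) : Umat 1 z ∈ Matrix.unitaryGroup (Fin 2) ℂ := by
  have hpos : (0:ℝ) < 1 + normSq z := by have := normSq_nonneg z; linarith
  have hne : ((Real.sqrt (1 + normSq z) : ℝ) : ℂ) ≠ 0 := by
    simpa using ne_of_gt (Real.sqrt_pos.mpr hpos)
  have hss : ((Real.sqrt (1 + normSq z) : ℝ) : ℂ) * ((Real.sqrt (1 + normSq z) : ℝ) : ℂ)
      = 1 + (normSq z : ℂ) := by
    rw [← Complex.ofReal_mul, Real.mul_self_sqrt hpos.le]; push_cast; ring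
  rw [Matrix.mem_unitaryGroup_iff]
  ext i j
  fin_cases i <;> fin_cases j <;>
    simp [Umat, Matrix.mul_apply, Fin.sum_univ_two, Matrix.one_apply,
      star_eq_conjTranspose, conjTranspose_apply, normSq_one] <;>
    field_simp <;>
    ring_nf <;>
    linear_combination -hss + mul_conj z

/-- for any `ψ = |0⟩A + |1⟩B` there is a unitary `W` with
`det A' = 0` for `(W ⊗ I ⊗ I)ψ = |0⟩A' + |1⟩B'`; moreover if `det B ≠ 0` one may take
`W = U(1,z₀)` for any root `z₀` of `det(A + zB) = 0`, and if `det B = 0` one may take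
`W = [[0,1],[-1,0]]`. -/
theorem stmt_10 (ψ : Fin 8 → ℂ) :
    (∃ W ∈ Matrix.unitaryGroup (Fin 2) ℂ,
        (q3T0 ((kron3 W 1 1).mulVec ψ)).det = 0) ∧
    ((q3T1 ψ).det ≠ 0 →
      ∀ z₀ : ℂ, (q3T0 ψ + z₀ • q3T1 ψ).det = 0 →
        (q3T0 ((kron3 (Umat 1 z₀) 1 1).mulVec ψ)).det = 0) ∧
    ((q3T1 ψ).det = 0 →
      (q3T0 ((kron3 !![0, 1; -1, 0] 1 1).mulVec ψ)).det = 0) := by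
  set A := q3T0 ψ
  set B := q3T1 ψ
  -- part 3 first
  have h3 : B.det = 0 → (q3T0 ((kron3 !![0, 1; -1, 0] 1 1).mulVec ψ)).det = 0 := by
    intro hB
    rw [key]
    simpa using hB
  -- part 2
  have h2 : ∀ z₀ : ℂ, (A + z₀ • B).det = 0 →
      (q3T0 ((kron3 (Umat 1 z₀) 1 1).mulVec ψ)).det = 0 := by
    intro z hz
    rw [key]
    have hU0 : (Umat 1 z) 0 0 = (((Real.sqrt (normSq 1 + normSq z))⁻¹ : ℝ) : ℂ) := by
      simp [Umat]
    have hU1 : (Umat 1 z) 0 1 = (((Real.sqrt (normSq 1 + normSq z))⁻¹ : ℝ) : ℂ) * z := by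
      simp [Umat]
    rw [hU0, hU1]
    set c : ℂ := (((Real.sqrt (normSq 1 + normSq z))⁻¹ : ℝ) : ℂ)
    have : c • A + (c * z) • B = c • (A + z • B) := by
      rw [smul_add, smul_smul]
    rw [this, Matrix.det_smul, hz, mul_zero]
  refine ⟨?_, fun _ z hz => h2 z hz, h3⟩
  by_cases hB : B.det = 0
  · exact ⟨!![0, 1; -1, 0], by
      rw [Matrix.mem_unitaryGroup_iff]
      ext i j
      fin_cases i <;> fin_cases j <;>
        simp [Matrix.mul_apply, Fin.sum_univ_two, Matrix.one_apply,
          star_eq_conjTranspose, conjTranspose_apply], h3 hB⟩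
  · -- det(A + zB) is a quadratic with leading coefficient det B ≠ 0
    set b : ℂ := A 0 0 * B 1 1 + B 0 0 * A 1 1 - A 0 1 * B 1 0 - B 0 1 * A 1 0
    set P : Polynomial ℂ := Polynomial.C B.det * Polynomial.X ^ 2 +
      Polynomial.C b * Polynomial.X + Polynomial.C A.det
    have hdeg : 0 < P.degree := by
      have hd2 : P.degree = 2 := by
        unfold P
        compute_degree!
      rw [hd2]; decide
    obtain ⟨z, hz⟩ := Complex.exists_root hdeg
    have heval : (A + z • B).det = P.eval z := by
      simp [P, Matrix.det_fin_two, Matrix.add_apply, Matrix.smul_apply, b, smul_eq_mul]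
      ring
    have hz0 : (A + z • B).det = 0 := by
      rw [heval]; exact hz
    exact ⟨Umat 1 z, umat_unitary z, h2 z hz0⟩
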